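/- arXiv:1111.6514 — 4 statements merged into one kernel-verified Lean document; each statement's English description precedes it below -/
import Mathlib

section
/- For any real numbers a with |a| < 1 and any even integer n ≥ 2, the principal value integral over [0, 2π] of sin^{n-2}(φ)/(cos φ − a)^n dφ is zero. -/
open Real Filter Complex MeasureTheory intervalIntegral

noncomputable def Jaux (m : ℕ) (w : ℂ) : ℂ :=
  ∫ φ in (0:ℝ)..(2*π), (Real.sin φ : ℂ) ^ m / ((Real.cos φ : ℂ) - w) ^ (m+1)

noncomputable def Iaux (m : ℕ) (w : ℂ) : ℂ :=
  ∫ φ in (0:ℝ)..(2*π), (Real.sin φ : ℂ) ^ m / ((Real.cos φ : ℂ) - w) ^ (m+2)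

lemma den_ne {w : ℂ} (hw : w.im ≠ 0) (φ : ℝ) : (Real.cos φ : ℂ) - w ≠ 0 := by
  intro h
  have h2 := congrArg Complex.im h
  simp only [Complex.sub_im, Complex.ofReal_im, Complex.zero_im, zero_sub, neg_eq_zero] at h2
  exact hw h2

lemma contAux {w : ℂ} (hw : w.im ≠ 0) (m k : ℕ) :
    Continuous fun φ : ℝ => (Real.sin φ : ℂ) ^ m / ((Real.cos φ : ℂ) - w) ^ k := by
  apply Continuous.div
  · fun_prop
  · fun_prop
  · intro φ; exact pow_ne_zero _ (den_ne hw φ)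

lemma pow_comp {G : ℝ → ℂ} {G' : ℂ} {x : ℝ} (h : HasDerivAt G G' x) (k : ℕ) :
    HasDerivAt (fun t => (G t)^k) ((k:ℂ) * (G x)^(k-1) * G') x := by
  have h2 := HasDerivAt.scomp (x := x) (hasDerivAt_pow k (G x)) h
  convert h2 using 1
  · rfl
  · rfl
  simp only [Function.comp, smul_eq_mul]
  ring

lemma alg1 (m : ℕ) (w s c : ℂ) (hne : c - w ≠ 0) :
    ((m:ℂ)+1) * ((1 - w^2) * (s^m / (c - w)^(m+2)) - w * (s^m / (c - w)^(m+1)))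
      = ((m+1:ℕ):ℂ) * (s/(c-w)) ^ (m + 1 - 1) * ((1 - w*c)/(c-w)^2) := by
  simp only [Nat.add_sub_cancel, div_pow]
  push_cast
  field_simp
  ring

lemma key_identity (m : ℕ) {w : ℂ} (hw : w.im ≠ 0) :
    (1 - w^2) * Iaux m w = w * Jaux m w := by
  have hder : ∀ φ : ℝ, HasDerivAt
      (fun φ : ℝ => ((Real.sin φ : ℂ)/((Real.cos φ : ℂ) - w)) ^ (m+1))
      (((m:ℂ)+1) * ((1 - w^2) * ((Real.sin φ:ℂ)^m / ((Real.cos φ:ℂ) - w)^(m+2))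
        - w * ((Real.sin φ:ℂ)^m / ((Real.cos φ:ℂ) - w)^(m+1)))) φ := by
    intro φ
    have hs : HasDerivAt (fun φ : ℝ => (Real.sin φ : ℂ)) ((Real.cos φ : ℂ)) φ :=
      (Real.hasDerivAt_sin φ).ofReal_comp
    have hc : HasDerivAt (fun φ : ℝ => (Real.cos φ : ℂ) - w) (-(Real.sin φ : ℂ)) φ := by
      simpa using ((Real.hasDerivAt_cos φ).ofReal_comp.sub_const w)
    have hq := pow_comp (hs.div hc (den_ne hw φ)) (m+1)
    have pyth : (Real.sin φ : ℂ)^2 = 1 - (Real.cos φ : ℂ)^2 := by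
      have h3 := Real.sin_sq_add_cos_sq φ
      have h4 : ((Real.sin φ)^2 + (Real.cos φ)^2 : ℂ) = 1 := by exact_mod_cast congrArg Complex.ofReal h3
      linear_combination h4
    have hnum : ((Real.cos φ:ℂ) * ((Real.cos φ:ℂ) - w) - (Real.sin φ:ℂ) * (-(Real.sin φ:ℂ)))
        = 1 - w * (Real.cos φ:ℂ) := by linear_combination pyth
    rw [hnum] at hq
    rw [alg1 m w (Real.sin φ : ℂ) (Real.cos φ : ℂ) (den_ne hw φ)]
    exact hq
  have hcont : Continuous fun φ : ℝ => (((m:ℂ)+1) * ((1 - w^2) * ((Real.sin φ:ℂ)^m / ((Real.cos φ:ℂ) - w)^(m+2))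
        - w * ((Real.sin φ:ℂ)^m / ((Real.cos φ:ℂ) - w)^(m+1)))) :=
    continuous_const.mul ((continuous_const.mul (contAux hw m (m+2))).sub
      (continuous_const.mul (contAux hw m (m+1))))
  have hFTC := intervalIntegral.integral_eq_sub_of_hasDerivAt (fun φ _ => hder φ)
    (hcont.intervalIntegrable 0 (2*π))
  rw [Real.sin_zero, Real.sin_two_pi] at hFTC
  simp only [Complex.ofReal_zero, zero_div, zero_pow (Nat.succ_ne_zero m), sub_zero] at hFTC
  have hsplit : ∫ φ in (0:ℝ)..(2*π), (((m:ℂ)+1) * ((1 - w^2) * ((Real.sin φ:ℂ)^m / ((Real.cos φ:ℂ) - w)^(m+2))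
        - w * ((Real.sin φ:ℂ)^m / ((Real.cos φ:ℂ) - w)^(m+1))))
      = ((m:ℂ)+1) * ((1 - w^2) * Iaux m w - w * Jaux m w) := by
    rw [intervalIntegral.integral_const_mul]
    congr 1
    rw [intervalIntegral.integral_sub, intervalIntegral.integral_const_mul,
      intervalIntegral.integral_const_mul]
    · rfl
    · exact ((contAux hw m (m+2)).intervalIntegrable 0 (2*π)).const_mul _
    · exact ((contAux hw m (m+1)).intervalIntegrable 0 (2*π)).const_mul _
  rw [hsplit] at hFTC
  have hm1 : ((m:ℂ)+1) ≠ 0 := by exact_mod_cast Nat.succ_ne_zero m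
  exact sub_eq_zero.mp ((mul_eq_zero.mp hFTC).resolve_left hm1)

lemma alg2 (m : ℕ) (s d : ℂ) (hd : d ≠ 0) :
    ((m:ℂ)+1) * (s^m / d^(m+2)) =
      (0 * d^(m+1) - s^m * (((m+1:ℕ):ℂ) * d^m * (-1))) / (d^(m+1))^2 := by
  push_cast
  field_simp
  ring

lemma hasDerivAt_Jaux (m : ℕ) {w₀ : ℂ} (hw : w₀.im ≠ 0) :
    HasDerivAt (Jaux m) (((m:ℂ)+1) * Iaux m w₀) w₀ := by
  set δ : ℝ := |w₀.im| / 2 with hδdef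
  have hδ : 0 < δ := by
    have : 0 < |w₀.im| := abs_pos.mpr hw
    positivity
  -- lower bound on denominators
  have him : ∀ x ∈ Metric.ball w₀ δ, δ ≤ |x.im| := by
    intro x hx
    have h1 : |x.im - w₀.im| ≤ dist x w₀ := by
      rw [Complex.dist_eq]
      simpa using Complex.abs_im_le_norm (x - w₀)
    have h2 : dist x w₀ < δ := Metric.mem_ball.mp hx
    have := abs_sub_abs_le_abs_sub w₀.im x.im
    rw [abs_sub_comm w₀.im x.im] at this
    linarith [abs_sub_abs_le_abs_sub x.im w₀.im]
  have hlow : ∀ x ∈ Metric.ball w₀ δ, ∀ φ : ℝ, δ ≤ ‖(Real.cos φ : ℂ) - x‖ := by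
    intro x hx φ
    have h3 : |((Real.cos φ : ℂ) - x).im| ≤ ‖(Real.cos φ : ℂ) - x‖ :=
      Complex.abs_im_le_norm _
    have h4 : ((Real.cos φ : ℂ) - x).im = -x.im := by simp
    rw [h4, abs_neg] at h3
    exact le_trans (him x hx) h3
  have hne : ∀ x ∈ Metric.ball w₀ δ, ∀ φ : ℝ, (Real.cos φ : ℂ) - x ≠ 0 := by
    intro x hx φ
    intro h
    have h5 := hlow x hx φ
    rw [h] at h5
    simp at h5
    linarith
  have hdiff : ∀ φ : ℝ, ∀ x ∈ Metric.ball w₀ δ,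
      HasDerivAt (fun x : ℂ => (Real.sin φ : ℂ) ^ m / ((Real.cos φ : ℂ) - x) ^ (m+1))
        (((m:ℂ)+1) * ((Real.sin φ : ℂ) ^ m / ((Real.cos φ : ℂ) - x) ^ (m+2))) x := by
    intro φ x hx
    have hden : HasDerivAt (fun x : ℂ => ((Real.cos φ : ℂ) - x) ^ (m+1))
        (((m+1:ℕ):ℂ) * ((Real.cos φ : ℂ) - x) ^ m * (-1)) x := by
      have h6 : HasDerivAt (fun x : ℂ => (Real.cos φ : ℂ) - x) (-1) x := by
        simpa using (hasDerivAt_id x).const_sub ((Real.cos φ : ℂ))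
      simpa using h6.fun_pow (m+1)
    have h7 := (hasDerivAt_const x ((Real.sin φ : ℂ) ^ m)).div hden
      (pow_ne_zero _ (hne x hx φ))
    rw [alg2 m _ _ (hne x hx φ)]
    exact h7
  -- now apply the dominated convergence lemma
  have key := intervalIntegral.hasDerivAt_integral_of_dominated_loc_of_deriv_le
    (𝕜 := ℂ) (μ := MeasureTheory.volume) (a := 0) (b := 2*π)
    (F := fun x φ => (Real.sin φ : ℂ) ^ m / ((Real.cos φ : ℂ) - x) ^ (m+1))
    (F' := fun x φ => ((m:ℂ)+1) * ((Real.sin φ : ℂ) ^ m / ((Real.cos φ : ℂ) - x) ^ (m+2)))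
    (x₀ := w₀) (s := Metric.ball w₀ δ) (bound := fun _ => ((m:ℝ)+1) * (1 / δ^(m+2))) (Metric.ball_mem_nhds w₀ hδ)
    ?meas ?int ?meas' ?bound ?bint ?diff
  · have h9 : (∫ φ in (0:ℝ)..(2*π), ((m:ℂ)+1) * ((Real.sin φ : ℂ) ^ m / ((Real.cos φ : ℂ) - w₀) ^ (m+2)))
        = ((m:ℂ)+1) * Iaux m w₀ := intervalIntegral.integral_const_mul _ _
    rw [h9] at key
    exact key.2
  case meas =>
    filter_upwards [Metric.ball_mem_nhds w₀ hδ] with x hx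
    have hxim : x.im ≠ 0 := by
      have := him x hx
      intro h0; rw [h0] at this; simp at this; linarith
    exact (contAux hxim m (m+1)).aestronglyMeasurable
  case int => exact (contAux hw m (m+1)).intervalIntegrable 0 (2*π)
  case meas' =>
    exact ((continuous_const.mul (contAux hw m (m+2)))).aestronglyMeasurable
  case bound =>
    apply Filter.Eventually.of_forall
    intro φ _ x hx
    have h10 : δ ≤ ‖(Real.cos φ : ℂ) - x‖ := by
      exact hlow x hx φ
    rw [norm_mul, norm_div, norm_pow, norm_pow]
    have hsin : ‖(Real.sin φ : ℂ)‖ ≤ 1 := by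
      rw [Complex.norm_real, Real.norm_eq_abs]
      exact Real.abs_sin_le_one φ
    have hden2 : δ^(m+2) ≤ ‖(Real.cos φ : ℂ) - x‖^(m+2) := by
      exact pow_le_pow_left₀ hδ.le h10 _
    have hnorm1 : ‖((m:ℂ)+1)‖ = (m:ℝ)+1 := by
      rw [show ((m:ℂ)+1) = ((m+1:ℕ):ℂ) by push_cast; ring]
      rw [Complex.norm_natCast]
      push_cast; ring
    rw [hnorm1]
    apply mul_le_mul_of_nonneg_left _ (by positivity)
    rw [div_le_div_iff₀ (pow_pos (lt_of_lt_of_le hδ h10) _) (by positivity)]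
    calc ‖(Real.sin φ : ℂ)‖ ^ m * δ^(m+2) ≤ 1 * δ^(m+2) := by
          apply mul_le_mul_of_nonneg_right _ (by positivity)
          exact pow_le_one₀ (norm_nonneg _) hsin
      _ ≤ 1 * ‖(Real.cos φ : ℂ) - x‖^(m+2) := by
          rw [one_mul, one_mul]; exact hden2
  case bint => exact intervalIntegrable_const
  case diff =>
    apply Filter.Eventually.of_forall
    intro φ _ x hx
    exact hdiff φ x hx

lemma Haux_const (m : ℕ) {w : ℂ} (hw : 0 < w.im) :
    (Jaux m w)^2 * (1 - w^2)^(m+1) = (Jaux m Complex.I)^2 * (1 - Complex.I^2)^(m+1) := by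
  set U : Set ℂ := {z : ℂ | 0 < z.im} with hU
  have hUopen : IsOpen U := isOpen_lt continuous_const Complex.continuous_im
  have hUconv : Convex ℝ U := convex_halfSpace_im_gt 0
  set H : ℂ → ℂ := fun z => (Jaux m z)^2 * (1 - z^2)^(m+1) with hH
  have hder : ∀ z ∈ U, HasDerivAt H 0 z := by
    intro z hz
    have hzim : z.im ≠ 0 := ne_of_gt hz
    have h1 := hasDerivAt_Jaux m hzim
    have h2 : HasDerivAt (fun z : ℂ => 1 - z^2) (-(2*z)) z := by
      simpa using (hasDerivAt_pow 2 z).const_sub 1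
    have h3 := h2.fun_pow (m+1)
    have h4 := (h1.fun_pow 2).mul h3
    convert h4 using 1
    · rfl
    · rfl
    · rfl
    have hk := key_identity m hzim
    simp only [Nat.add_sub_cancel]
    push_cast
    linear_combination (-(2*((m:ℂ)+1)* (1-z^2)^m * Jaux m z)) * hk
  have hdiff : DifferentiableOn ℂ H U := fun z hz =>
    (hder z hz).differentiableAt.differentiableWithinAt
  have hfd : ∀ z ∈ U, fderivWithin ℂ H U z = 0 := by
    intro z hz
    rw [fderivWithin_of_isOpen hUopen hz]
    have := (hder z hz).deriv
    have h5 : deriv H z = 0 := this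
    ext v
    simp [← toSpanSingleton_deriv, h5]
  have hI : Complex.I ∈ U := by simp [hU, Complex.I_im]
  exact hUconv.is_const_of_fderivWithin_eq_zero hdiff hfd hw hI

lemma intervalIntegral_conj {f : ℝ → ℂ} {a b : ℝ} :
    ∫ x in a..b, (starRingEnd ℂ) (f x) = (starRingEnd ℂ) (∫ x in a..b, f x) := by
  simp only [intervalIntegral]
  rw [map_sub, ← integral_conj, ← integral_conj]

lemma Jaux_I_re (m : ℕ) (hm : Even m) : (Jaux m Complex.I).re = 0 := by
  set u : ℝ → ℂ := fun φ : ℝ => (Real.sin φ : ℂ) ^ m / ((Real.cos φ : ℂ) - Complex.I) ^ (m+1)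
    with hu
  have hper : Function.Periodic u (2*π) := by
    intro x
    simp only [hu, Real.sin_add_two_pi, Real.cos_add_two_pi]
  have hconj : (starRingEnd ℂ) (Jaux m Complex.I) = - Jaux m Complex.I := by
    rw [Jaux, ← intervalIntegral_conj]
    have h1 : ∀ φ : ℝ, (starRingEnd ℂ) ((Real.sin φ : ℂ) ^ m / ((Real.cos φ : ℂ) - Complex.I) ^ (m+1))
        = -(u (φ + π)) := by
      intro φ
      simp only [hu, map_div₀, map_pow, map_sub, Complex.conj_ofReal, Complex.conj_I,
        sub_neg_eq_add, Real.sin_add_pi, Real.cos_add_pi, Complex.ofReal_neg]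
      rw [hm.neg_pow]
      rw [show (-(Real.cos φ:ℂ) - Complex.I) = -((Real.cos φ:ℂ) + Complex.I) by ring]
      rw [(hm.add_one).neg_pow]
      rw [div_neg, neg_neg]
    rw [intervalIntegral.integral_congr (g := fun φ => -(u (φ + π))) (fun φ _ => h1 φ)]
    rw [intervalIntegral.integral_neg]
    rw [intervalIntegral.integral_comp_add_right (fun x => u x) π]
    have h2 : ∫ x in (0+π)..(2*π+π), u x = ∫ x in (0:ℝ)..(2*π), u x := by
      have h3 := hper.intervalIntegral_add_eq π 0
      rw [zero_add] at h3 ⊢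
      rw [show (2*π + π : ℝ) = π + 2*π by ring]
      exact h3
    rw [h2]
  have h4 := congrArg Complex.re hconj
  simp only [Complex.conj_re, Complex.neg_re] at h4
  linarith

lemma one_sub_sq_ne {w : ℂ} (hw : w.im ≠ 0) : 1 - w^2 ≠ 0 := by
  intro h
  have h1 : w^2 = 1 := by linear_combination -h
  have h2 : (w^2).im = 0 := by rw [h1]; simp
  have h3 : (w^2).re = 1 := by rw [h1]; simp
  rw [pow_two, Complex.mul_im] at h2
  rw [pow_two, Complex.mul_re] at h3
  have h4 : w.re * w.im = 0 := by linarith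
  rcases mul_eq_zero.mp h4 with h5 | h5
  · rw [h5] at h3
    nlinarith [sq_nonneg w.im]
  · exact hw h5

theorem stmt_0 (a : ℝ) (ha : |a| < 1) (n : ℕ) (hn : 2 ≤ n) (hne : Even n) :
    Tendsto
      (fun ε : ℝ =>
        (∫ φ in (0 : ℝ)..(2 * π),
            ((Real.sin φ : ℂ) ^ (n - 2) / ((Real.cos φ : ℂ) - a - ε * Complex.I) ^ n)).re)
      (nhdsWithin 0 (Set.Ioi 0)) (nhds 0) := by
  obtain ⟨m, rfl⟩ : ∃ m, n = m + 2 := ⟨n - 2, by omega⟩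
  have hm : Even m := by
    rcases hne with ⟨k, hk⟩
    exact ⟨k - 1, by omega⟩
  have ha2 : a^2 < 1 := by
    have := abs_lt.mp ha
    nlinarith [this.1, this.2]
  -- the constant K = (k : ℂ) with k ≤ 0
  set k : ℝ := -((Jaux m Complex.I).im)^2 * 2^(m+1) with hkdef
  have hk0 : k ≤ 0 := by
    have : (0:ℝ) ≤ ((Jaux m Complex.I).im)^2 := sq_nonneg _
    have h2 : (0:ℝ) < 2^(m+1) := by positivity
    nlinarith
  have hKval : (Jaux m Complex.I)^2 * (1 - Complex.I^2)^(m+1) = (k:ℂ) := by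
    have hre := Jaux_I_re m hm
    have hJsq : (Jaux m Complex.I)^2 = ((-((Jaux m Complex.I).im)^2 : ℝ) : ℂ) := by
      apply Complex.ext <;>
        simp [pow_two, Complex.mul_re, Complex.mul_im, hre]
    rw [hJsq, Complex.I_sq]
    rw [show (1 - (-1) : ℂ) = 2 by ring]
    push_cast [hkdef]
    ring
  -- w ε and its properties
  have hwim : ∀ ε : ℝ, ((a:ℂ) + ε * Complex.I).im = ε := by
    intro ε; simp
  -- the squared formula
  have hsq : ∀ ε ∈ Set.Ioi (0:ℝ),
      (Iaux m ((a:ℂ) + ε * Complex.I))^2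
        = (k:ℂ) * ((a:ℂ) + ε * Complex.I)^2 / (1 - ((a:ℂ) + ε * Complex.I)^2)^(m+3) := by
    intro ε hε
    set w : ℂ := (a:ℂ) + ε * Complex.I with hw
    have hεpos : (0:ℝ) < ε := hε
    have him : w.im = ε := hwim ε
    have him' : w.im ≠ 0 := by rw [him]; exact ne_of_gt hεpos
    have himpos : 0 < w.im := by rw [him]; exact hεpos
    have hone := one_sub_sq_ne him'
    have hkey := key_identity m him'
    have hconst := (Haux_const m himpos).trans hKval
    rw [eq_div_iff (pow_ne_zero _ hone)]
    have hexp : (1 - w^2)^(m+3) = (1-w^2)^2 * (1-w^2)^(m+1) := by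
      rw [← pow_add]
      congr 1
      omega
    rw [hexp]
    linear_combination ((1-w^2) * Iaux m w + w * Jaux m w) * (1-w^2)^(m+1) * hkey
      + (w^2) * hconst
  -- limit of the rational function
  have hOne : (1 - ((a:ℂ))^2) ≠ 0 := by
    rw [show (1:ℂ) - (a:ℂ)^2 = ((1 - a^2 : ℝ) : ℂ) by push_cast; ring]
    rw [Complex.ofReal_ne_zero]
    nlinarith
  set l : ℝ := k * a^2 / (1-a^2)^(m+3) with hldef
  have hl0 : l ≤ 0 := by
    have h0 : (0:ℝ) < 1 - a^2 := by nlinarith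
    have h1 : (0:ℝ) < (1-a^2)^(m+3) := by positivity
    have h2 : (0:ℝ) ≤ a^2 := sq_nonneg a
    rw [hldef]
    apply div_nonpos_of_nonpos_of_nonneg _ h1.le
    nlinarith
  have hcont : ContinuousAt
      (fun ε : ℝ => (k:ℂ) * ((a:ℂ) + ε * Complex.I)^2 / (1 - ((a:ℂ) + ε * Complex.I)^2)^(m+3)) 0 := by
    apply ContinuousAt.div
    · fun_prop
    · fun_prop
    · simp only [Complex.ofReal_zero, zero_mul, add_zero]
      exact pow_ne_zero _ (by push_cast at hOne ⊢; exact hOne)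
  have htend : Tendsto
      (fun ε : ℝ => (k:ℂ) * ((a:ℂ) + ε * Complex.I)^2 / (1 - ((a:ℂ) + ε * Complex.I)^2)^(m+3))
      (nhdsWithin 0 (Set.Ioi 0)) (nhds (l:ℂ)) := by
    have h0 : (fun ε : ℝ => (k:ℂ) * ((a:ℂ) + ε * Complex.I)^2 / (1 - ((a:ℂ) + ε * Complex.I)^2)^(m+3)) 0 = (l:ℂ) := by
      simp only [Complex.ofReal_zero, zero_mul, add_zero]
      rw [hldef]
      push_cast
      try ring
    rw [← h0]
    exact hcont.continuousWithinAt.tendsto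
  have hsq_tend : Tendsto (fun ε : ℝ => (Iaux m ((a:ℂ) + ε * Complex.I))^2)
      (nhdsWithin 0 (Set.Ioi 0)) (nhds (l:ℂ)) := by
    apply htend.congr'
    exact Filter.eventuallyEq_of_mem self_mem_nhdsWithin (fun ε hε => (hsq ε hε).symm)
  -- deduce Re → 0
  have hid : ∀ z : ℂ, (z.re)^2 = (‖z^2‖ + (z^2).re)/2 := by
    intro z
    rw [norm_pow, Complex.sq_norm]
    simp [Complex.normSq_apply, pow_two, Complex.mul_re]
    try ring
  have habs : Tendsto (fun ε : ℝ => ‖(Iaux m ((a:ℂ) + ε * Complex.I))^2‖)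
      (nhdsWithin 0 (Set.Ioi 0)) (nhds ‖(l:ℂ)‖) :=
    (continuous_norm.tendsto _).comp hsq_tend
  have hre : Tendsto (fun ε : ℝ => ((Iaux m ((a:ℂ) + ε * Complex.I))^2).re)
      (nhdsWithin 0 (Set.Ioi 0)) (nhds ((l:ℂ).re)) :=
    (Complex.continuous_re.tendsto _).comp hsq_tend
  have hsum : Tendsto (fun ε : ℝ => ((Iaux m ((a:ℂ) + ε * Complex.I)).re)^2)
      (nhdsWithin 0 (Set.Ioi 0)) (nhds 0) := by
    have h5 := (habs.add hre).div_const 2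
    have h6 : (‖(l:ℂ)‖ + (l:ℂ).re)/2 = 0 := by
      rw [Complex.norm_real, Real.norm_eq_abs, Complex.ofReal_re, abs_of_nonpos hl0]
      ring
    rw [h6] at h5
    apply h5.congr
    intro ε
    rw [hid]
  have habs2 : Tendsto (fun ε : ℝ => |(Iaux m ((a:ℂ) + ε * Complex.I)).re|)
      (nhdsWithin 0 (Set.Ioi 0)) (nhds 0) := by
    have h7 := (Real.continuous_sqrt.tendsto 0).comp hsum
    rw [Real.sqrt_zero] at h7
    apply h7.congr
    intro ε
    simp [Real.sqrt_sq_eq_abs]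
  have hfinal : Tendsto (fun ε : ℝ => (Iaux m ((a:ℂ) + ε * Complex.I)).re)
      (nhdsWithin 0 (Set.Ioi 0)) (nhds 0) :=
    (tendsto_zero_iff_abs_tendsto_zero _).mpr habs2
  apply hfinal.congr
  intro ε
  congr 1
  rw [Iaux]
  apply intervalIntegral.integral_congr
  intro φ _
  simp only [Nat.add_sub_cancel, sub_sub]
end

section
/- Let t and s be real trigonometric polynomials with deg s < deg t, all zeros of t (in ℂ/2πℤ) real and simple, and set r = s/t. Then the principal value integral (P)∫_0^{2π} r^n(φ) dφ = 0 for every natural number n ≥ 1. -/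
open Real Filter

lemma abs_cos_le (z : ℂ) (hz : 0 ≤ z.im) : ‖Complex.cos z‖ ≤ Real.exp z.im := by
  rw [Complex.cos, norm_div]
  simp only [Complex.norm_ofNat]
  rw [div_le_iff₀ (by norm_num : (0:ℝ) < 2)]
  calc ‖Complex.exp (z*Complex.I) + Complex.exp (-z*Complex.I)‖
      ≤ ‖Complex.exp (z*Complex.I)‖ + ‖Complex.exp (-z*Complex.I)‖ :=
        norm_add_le _ _
    _ = Real.exp (-z.im) + Real.exp (z.im) := by
        rw [Complex.norm_exp, Complex.norm_exp]; simp [Complex.mul_I_re]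
    _ ≤ Real.exp z.im * 2 := by nlinarith [Real.exp_le_exp.2 (neg_le_self hz)]

lemma abs_sin_le (z : ℂ) (hz : 0 ≤ z.im) : ‖Complex.sin z‖ ≤ Real.exp z.im := by
  rw [Complex.sin, norm_div]
  simp only [Complex.norm_ofNat, norm_mul, Complex.norm_I, mul_one]
  rw [div_le_iff₀ (by norm_num : (0:ℝ) < 2)]
  calc ‖Complex.exp (-z*Complex.I) - Complex.exp (z*Complex.I)‖
      ≤ ‖Complex.exp (-z*Complex.I)‖ + ‖Complex.exp (z*Complex.I)‖ := by
        simpa [sub_eq_add_neg] using norm_add_le (Complex.exp (-z*Complex.I)) (-Complex.exp (z*Complex.I))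
    _ = Real.exp (z.im) + Real.exp (-z.im) := by
        rw [Complex.norm_exp, Complex.norm_exp]; simp [Complex.mul_I_re]
    _ ≤ Real.exp z.im * 2 := by nlinarith [Real.exp_le_exp.2 (neg_le_self hz)]

lemma trig_sum_abs_le (m : ℕ) (a b : ℕ → ℝ) (z : ℂ) (hz : 0 ≤ z.im) :
    ‖∑ j ∈ Finset.range (m+1),
        ((a j : ℂ) * Complex.cos (j*z) + (b j : ℂ) * Complex.sin (j*z))‖
      ≤ (∑ j ∈ Finset.range (m+1), (|a j| + |b j|)) * Real.exp (m * z.im) := by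
  rw [Finset.sum_mul]
  refine (norm_sum_le _ _).trans (Finset.sum_le_sum fun j hj => ?_)
  have hjm : (j:ℝ) ≤ m := by exact_mod_cast Nat.lt_succ_iff.mp (Finset.mem_range.mp hj)
  have him : ((j:ℂ)*z).im = j * z.im := by simp
  have h1 : ‖Complex.cos ((j:ℂ)*z)‖ ≤ Real.exp (m * z.im) := by
    refine (abs_cos_le _ (by rw [him]; positivity)).trans ?_
    rw [him]; exact Real.exp_le_exp.2 (by nlinarith)
  have h2 : ‖Complex.sin ((j:ℂ)*z)‖ ≤ Real.exp (m * z.im) := by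
    refine (abs_sin_le _ (by rw [him]; positivity)).trans ?_
    rw [him]; exact Real.exp_le_exp.2 (by nlinarith)
  calc ‖(a j : ℂ) * Complex.cos (j*z) + (b j : ℂ) * Complex.sin (j*z)‖
      ≤ |a j| * ‖Complex.cos ((j:ℂ)*z)‖
        + |b j| * ‖Complex.sin ((j:ℂ)*z)‖ := by
        refine (norm_add_le _ _).trans ?_
        rw [norm_mul, norm_mul, Complex.norm_real, Complex.norm_real, Real.norm_eq_abs, Real.norm_eq_abs]
    _ ≤ (|a j| + |b j|) * Real.exp (m * z.im) := by
        nlinarith [abs_nonneg (a j), abs_nonneg (b j),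
          norm_nonneg (Complex.cos ((j:ℂ)*z)), norm_nonneg (Complex.sin ((j:ℂ)*z))]

lemma T_lower (m : ℕ) (a b : ℕ → ℝ) (z : ℂ) (hz : 0 ≤ z.im) :
    ‖((a (m+1) : ℂ) + (b (m+1) : ℂ) * Complex.I)/2‖ * Real.exp ((m+1) * z.im)
      - (‖((a (m+1) : ℂ) - (b (m+1) : ℂ) * Complex.I)/2‖
         + ∑ j ∈ Finset.range (m+1), (|a j| + |b j|)) * Real.exp (m * z.im)
    ≤ ‖∑ j ∈ Finset.range (m+2),
        ((a j : ℂ) * Complex.cos (j*z) + (b j : ℂ) * Complex.sin (j*z))‖ := by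
  set L : ℂ := ((a (m+1) : ℂ) + (b (m+1) : ℂ) * Complex.I)/2
    * Complex.exp (-((((m+1) : ℕ) : ℂ) * z) * Complex.I) with hL
  set R : ℂ := ((a (m+1) : ℂ) - (b (m+1) : ℂ) * Complex.I)/2
    * Complex.exp (((((m+1) : ℕ) : ℂ) * z) * Complex.I)
    + ∑ j ∈ Finset.range (m+1), ((a j : ℂ) * Complex.cos (j*z) + (b j : ℂ) * Complex.sin (j*z)) with hR
  have key : ∑ j ∈ Finset.range (m+2),
      ((a j : ℂ) * Complex.cos (j*z) + (b j : ℂ) * Complex.sin (j*z)) = L + R := by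
    rw [Finset.sum_range_succ, hL, hR, Complex.cos, Complex.sin]
    ring
  have hre1 : (-((((m+1) : ℕ) : ℂ) * z) * Complex.I).re = (m+1) * z.im := by
    simp [Complex.mul_I_re]
  have hre2 : (((((m+1) : ℕ) : ℂ) * z) * Complex.I).re = -((m+1) * z.im) := by
    simp [Complex.mul_I_re]
  have hLabs : ‖L‖ = ‖((a (m+1) : ℂ) + (b (m+1) : ℂ) * Complex.I)/2‖
      * Real.exp ((m+1) * z.im) := by
    rw [hL, norm_mul, Complex.norm_exp, hre1]
  have hRabs : ‖R‖ ≤ (‖((a (m+1) : ℂ) - (b (m+1) : ℂ) * Complex.I)/2‖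
         + ∑ j ∈ Finset.range (m+1), (|a j| + |b j|)) * Real.exp (m * z.im) := by
    rw [hR, add_mul]
    refine (norm_add_le _ _).trans (add_le_add ?_ (trig_sum_abs_le m a b z hz))
    rw [norm_mul, Complex.norm_exp, hre2]
    refine mul_le_mul_of_nonneg_left (Real.exp_le_exp.2 (by nlinarith)) (norm_nonneg _)
  have h3 : ‖L‖ ≤ ‖L + R‖ + ‖R‖ := by
    simpa using (norm_add_le (L+R) (-R))
  rw [key]
  rw [hLabs] at h3
  linarith


lemma trig_diff (m : ℕ) (a b : ℕ → ℝ) :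
    Differentiable ℂ (fun z : ℂ => ∑ j ∈ Finset.range (m+1),
      ((a j : ℂ) * Complex.cos (j*z) + (b j : ℂ) * Complex.sin (j*z))) := by
  apply Differentiable.fun_sum
  intro j _
  exact ((Complex.differentiable_cos.comp ((differentiable_id).const_mul _)).const_mul _).add
    ((Complex.differentiable_sin.comp ((differentiable_id).const_mul _)).const_mul _)

lemma trig_per (m : ℕ) (a b : ℕ → ℝ) (z : ℂ) :
    (∑ j ∈ Finset.range (m+1),
      ((a j : ℂ) * Complex.cos ((j:ℂ)*(z + 2*π)) + (b j : ℂ) * Complex.sin ((j:ℂ)*(z + 2*π))))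
    = ∑ j ∈ Finset.range (m+1),
      ((a j : ℂ) * Complex.cos ((j:ℂ)*z) + (b j : ℂ) * Complex.sin ((j:ℂ)*z)) := by
  refine Finset.sum_congr rfl fun j _ => ?_
  have h : (j:ℂ) * (z + 2*π) = (j:ℂ)*z + (j:ℤ) * (2*π) := by push_cast; ring
  rw [h, Complex.cos_add_int_mul_two_pi, Complex.sin_add_int_mul_two_pi]

theorem stmt_4 (k l : ℕ) (hlk : l < k) (a b c d : ℕ → ℝ)
    (hlead : (a k, b k) ≠ (0, 0))
    (T S : ℂ → ℂ)
    (hT : ∀ ζ : ℂ, T ζ = ∑ j ∈ Finset.range (k + 1),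
        ((a j : ℂ) * Complex.cos (j * ζ) + (b j : ℂ) * Complex.sin (j * ζ)))
    (hS : ∀ ζ : ℂ, S ζ = ∑ j ∈ Finset.range (l + 1),
        ((c j : ℂ) * Complex.cos (j * ζ) + (d j : ℂ) * Complex.sin (j * ζ)))
    (hreal : ∀ ζ : ℂ, T ζ = 0 → ζ.im = 0)
    (hsimple : ∀ ζ : ℂ, T ζ = 0 → deriv T ζ ≠ 0)
    (n : ℕ) (hn : 1 ≤ n) :
    Tendsto
      (fun η : ℝ =>
        (∫ φ in (0 : ℝ)..(2 * π),
            (S ((φ : ℂ) + η * Complex.I) / T ((φ : ℂ) + η * Complex.I)) ^ n).re)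
      (nhdsWithin 0 (Set.Ioi 0)) (nhds 0) := by
  obtain ⟨m, rfl⟩ : ∃ m, k = m + 1 := ⟨k - 1, (Nat.succ_pred_eq_of_pos (by omega)).symm⟩
  have hlm : l ≤ m := Nat.lt_succ_iff.mp hlk
  set f : ℂ → ℂ := fun ζ => (S ζ / T ζ) ^ n with hf
  set g : ℝ → ℂ := fun η => ∫ φ in (0:ℝ)..(2*π), f ((φ:ℂ) + (η:ℂ) * Complex.I) with hg
  -- basic facts
  have hTfun : T = fun z : ℂ => ∑ j ∈ Finset.range ((m+1)+1),
      ((a j : ℂ) * Complex.cos (j*z) + (b j : ℂ) * Complex.sin (j*z)) := funext hT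
  have hSfun : S = fun z : ℂ => ∑ j ∈ Finset.range (l+1),
      ((c j : ℂ) * Complex.cos (j*z) + (d j : ℂ) * Complex.sin (j*z)) := funext hS
  have hTdiff : Differentiable ℂ T := hTfun ▸ trig_diff (m+1) a b
  have hSdiff : Differentiable ℂ S := hSfun ▸ trig_diff l c d
  have hTne : ∀ ζ : ℂ, 0 < ζ.im → T ζ ≠ 0 := by
    intro ζ h h0
    rw [hreal ζ h0] at h
    exact lt_irrefl 0 h
  have hfdiff : ∀ ζ : ℂ, 0 < ζ.im → DifferentiableAt ℂ f ζ := fun ζ h =>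
    (((hSdiff ζ).div (hTdiff ζ) (hTne ζ h)).pow n)
  have hfper : ∀ ζ : ℂ, f (ζ + 2*π) = f ζ := by
    intro ζ
    have h1 : T (ζ + 2*π) = T ζ := by rw [hT, hT]; exact trig_per (m+1) a b ζ
    have h2 : S (ζ + 2*π) = S ζ := by rw [hS, hS]; exact trig_per l c d ζ
    simp only [hf, h1, h2]
  -- constancy in η
  have hconst : ∀ η₁ η₂ : ℝ, 0 < η₁ → η₁ ≤ η₂ → g η₁ = g η₂ := by
    intro η₁ η₂ h1 h12
    have hd : DifferentiableOn ℂ f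
        (Set.uIcc ((η₁:ℂ)*Complex.I).re ((2*(π:ℂ) + (η₂:ℂ)*Complex.I)).re ×ℂ
         Set.uIcc ((η₁:ℂ)*Complex.I).im ((2*(π:ℂ) + (η₂:ℂ)*Complex.I)).im) := by
      intro ζ hζ
      rw [Complex.mem_reProdIm] at hζ
      have him : ζ.im ∈ Set.uIcc η₁ η₂ := by simpa using hζ.2
      rw [Set.uIcc_of_le h12] at him
      exact (hfdiff ζ (lt_of_lt_of_le h1 him.1)).differentiableWithinAt
    have H := Complex.integral_boundary_rect_eq_zero_of_differentiableOn f
      ((η₁:ℂ)*Complex.I) (2*(π:ℂ) + (η₂:ℂ)*Complex.I) hd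
    simp only [Complex.add_re, Complex.add_im, Complex.mul_re, Complex.mul_im,
      Complex.I_re, Complex.I_im, Complex.ofReal_re, Complex.ofReal_im,
      Complex.mul_I_re, Complex.mul_I_im] at H
    norm_num at H
    have hvert : (∫ y in η₁..η₂, f (2*(π:ℂ) + (y:ℂ) * Complex.I))
        = ∫ y in η₁..η₂, f ((y:ℂ) * Complex.I) := by
      refine intervalIntegral.integral_congr fun y _ => ?_
      rw [show (2*(π:ℂ) + (y:ℂ)*Complex.I) = ((y:ℂ)*Complex.I + 2*(π:ℂ)) from by ring, hfper]
    rw [hvert] at H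
    show (∫ φ in (0:ℝ)..(2*π), f ((φ:ℂ) + (η₁:ℂ)*Complex.I))
        = ∫ φ in (0:ℝ)..(2*π), f ((φ:ℂ) + (η₂:ℂ)*Complex.I)
    linear_combination H
  -- constants
  set A : ℝ := ‖((a (m+1) : ℂ) + (b (m+1) : ℂ) * Complex.I)/2‖ with hA
  set D : ℝ := ‖((a (m+1) : ℂ) - (b (m+1) : ℂ) * Complex.I)/2‖
      + ∑ j ∈ Finset.range (m+1), (|a j| + |b j|) with hD
  set B : ℝ := ∑ j ∈ Finset.range (l+1), (|c j| + |d j|) with hB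
  have hApos : 0 < A := by
    rw [hA]
    apply norm_pos_iff.mpr
    intro h0
    apply hlead
    rw [div_eq_zero_iff] at h0
    have h1 : ((a (m+1) : ℂ) + (b (m+1):ℂ) * Complex.I) = 0 := by
      rcases h0 with h0 | h0
      · exact h0
      · exact absurd h0 two_ne_zero
    have hre := congrArg Complex.re h1
    have him := congrArg Complex.im h1
    simp at hre him
    simp [hre, him]
  have hDnn : 0 ≤ D :=
    add_nonneg (norm_nonneg _)
      (Finset.sum_nonneg fun j _ => add_nonneg (abs_nonneg _) (abs_nonneg _))
  have hBnn : 0 ≤ B := Finset.sum_nonneg fun j _ => add_nonneg (abs_nonneg _) (abs_nonneg _)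
  have hπ := Real.two_pi_pos
  -- smallness of g 1
  have hsmall : ∀ ε : ℝ, 0 < ε → ‖g 1‖ ≤ ε := by
    intro ε hε
    set ε' : ℝ := min (ε / (2*π)) 1 with hε'
    have hε'pos : 0 < ε' := lt_min (div_pos hε hπ) one_pos
    have hε'le1 : ε' ≤ 1 := min_le_right _ _
    set η : ℝ := max 1 (Real.log ((D + B/ε' + 1)/A)) with hη
    have hη1 : 1 ≤ η := le_max_left _ _
    have hη0 : 0 ≤ η := by linarith
    have hexp : D + B/ε' + 1 ≤ A * Real.exp η := by
      have hpos : 0 < (D + B/ε' + 1)/A := by positivity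
      have h2 : Real.exp (Real.log ((D + B/ε' + 1)/A)) ≤ Real.exp η :=
        Real.exp_le_exp.2 (le_max_right _ _)
      rw [Real.exp_log hpos, div_le_iff₀ hApos] at h2
      linarith
    have e1 : Real.exp (((m:ℝ)+1) * η) = Real.exp ((m:ℝ) * η) * Real.exp η := by
      rw [← Real.exp_add]; ring_nf
    have e2 : Real.exp ((l:ℝ) * η) ≤ Real.exp ((m:ℝ) * η) := by
      have : (l:ℝ) ≤ (m:ℝ) := Nat.cast_le.2 hlm
      exact Real.exp_le_exp.2 (by nlinarith)
    have e3 : (1:ℝ) ≤ Real.exp ((m:ℝ) * η) := Real.one_le_exp (by positivity)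
    have e4 : (0:ℝ) < Real.exp ((l:ℝ)*η) := Real.exp_pos _
    have hBε : 0 ≤ B/ε' := by positivity
    have hTlow : (B/ε') * Real.exp ((l:ℝ)*η) + 1
        ≤ A * Real.exp (((m:ℝ)+1)*η) - D * Real.exp ((m:ℝ)*η) := by
      rw [e1]
      nlinarith [Real.exp_pos ((m:ℝ)*η)]
    have hpt : ∀ φ : ℝ, ‖f ((φ:ℂ) + (η:ℂ)*Complex.I)‖ ≤ ε' := by
      intro φ
      set ζ : ℂ := (φ:ℂ) + (η:ℂ)*Complex.I with hζ
      have hζim : ζ.im = η := by simp [hζ]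
      have hζim0 : 0 ≤ ζ.im := by rw [hζim]; exact hη0
      have hTabs : A * Real.exp (((m:ℝ)+1) * η) - D * Real.exp ((m:ℝ) * η)
          ≤ ‖T ζ‖ := by
        have h := T_lower m a b ζ hζim0
        rw [hζim] at h
        rw [hT]
        exact h
      have hSabs : ‖S ζ‖ ≤ B * Real.exp ((l:ℝ) * η) := by
        have h := trig_sum_abs_le l c d ζ hζim0
        rw [hζim] at h
        rw [hS]
        exact h
      have htrans : (B/ε') * Real.exp ((l:ℝ)*η) + 1 ≤ ‖T ζ‖ :=
        le_trans hTlow hTabs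
      have hTpos : 0 < ‖T ζ‖ := by
        linarith [mul_nonneg hBε e4.le]
      have hq : ‖S ζ‖ / ‖T ζ‖ ≤ ε' := by
        rw [div_le_iff₀ hTpos]
        have h5 : ε' * ((B/ε') * Real.exp ((l:ℝ)*η) + 1) ≤ ε' * ‖T ζ‖ := by
          exact mul_le_mul_of_nonneg_left htrans hε'pos.le
        have h6 : ε' * ((B/ε') * Real.exp ((l:ℝ)*η) + 1) = B * Real.exp ((l:ℝ)*η) + ε' := by
          field_simp
        linarith
      have hnorm : ‖f ζ‖ = (‖S ζ‖ / ‖T ζ‖)^n := by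
        rw [hf]
        simp [norm_pow, norm_div]
      rw [hnorm]
      calc (‖S ζ‖ / ‖T ζ‖)^n ≤ ε'^n :=
            pow_le_pow_left₀ (by positivity) hq n
        _ ≤ ε' := pow_le_of_le_one hε'pos.le hε'le1 (by omega)
    have hgη : ‖g η‖ ≤ ε' * |2*π - 0| :=
      intervalIntegral.norm_integral_le_of_norm_le_const (fun x _ => hpt x)
    rw [hconst 1 η one_pos hη1]
    have hfin : ε' * |2*π - 0| ≤ ε := by
      rw [sub_zero, abs_of_pos hπ]
      calc ε' * (2*π) ≤ (ε/(2*π)) * (2*π) :=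
            mul_le_mul_of_nonneg_right (min_le_left _ _) hπ.le
        _ = ε := by field_simp
    linarith
  have hg1 : g 1 = 0 := by
    have h0 : ‖g 1‖ ≤ 0 := by
      by_contra h
      push_neg at h
      linarith [hsmall (‖g 1‖/2) (by linarith)]
    simpa using norm_le_zero_iff.mp h0
  have hzero : ∀ η : ℝ, 0 < η → g η = 0 := by
    intro η hη
    rw [hconst η (max η 1) hη (le_max_left _ _),
      ← hconst 1 (max η 1) one_pos (le_max_right _ _), hg1]
  refine Tendsto.congr' ?_ tendsto_const_nhds
  filter_upwards [self_mem_nhdsWithin] with η hη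
  have : (∫ φ in (0:ℝ)..(2*π),
      (S ((φ:ℂ) + (η:ℂ)*Complex.I)/T ((φ:ℂ)+(η:ℂ)*Complex.I))^n) = g η := rfl
  rw [this, hzero η hη]
  simp
end

section
/- Let ξ(ω) = (a_1 ω_1, …, a_n ω_n) for ω ∈ S^{n−1} and a_i > 0, and let θ(x,ω) = |x − ξ(ω)|². Then for any x ≠ y in the closed solid ellipsoid E_a = {z : Σ z_i²/a_i² ≤ 1}, the function ω ↦ θ(x,ω) − θ(y,ω) has the form 2⟨ω, z⟩ + c with z ∈ ℝ^n, c ∈ ℝ, and |c| < 2|z|. -/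
open scoped RealInnerProductSpace

private lemma norm_sq_eq_sum {n : ℕ} (v : EuclideanSpace ℝ (Fin n)) :
    ‖v‖ ^ 2 = ∑ i, v i ^ 2 := by
  rw [EuclideanSpace.norm_eq, Real.sq_sqrt (by positivity)]
  simp [sq_abs]

private lemma inner_eq_sum {n : ℕ} (u v : EuclideanSpace ℝ (Fin n)) :
    ⟪u, v⟫ = ∑ i, u i * v i := by
  simp [PiLp.inner_apply, RCLike.inner_apply, mul_comm]

theorem stmt_11 (n : ℕ) (a : Fin n → ℝ) (ha : ∀ i, 0 < a i)
    (ξ : EuclideanSpace ℝ (Fin n) → EuclideanSpace ℝ (Fin n))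
    (hξ : ∀ ω, ∀ i, ξ ω i = a i * ω i)
    (θ : EuclideanSpace ℝ (Fin n) → EuclideanSpace ℝ (Fin n) → ℝ)
    (hθ : ∀ x ω, θ x ω = ‖x - ξ ω‖ ^ 2)
    (x y : EuclideanSpace ℝ (Fin n))
    (hx : ∑ i, x i ^ 2 / a i ^ 2 ≤ 1) (hy : ∑ i, y i ^ 2 / a i ^ 2 ≤ 1)
    (hxy : x ≠ y) :
    ∃ (z : EuclideanSpace ℝ (Fin n)) (c : ℝ),
      (∀ ω ∈ Metric.sphere (0 : EuclideanSpace ℝ (Fin n)) 1,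
        θ x ω - θ y ω = 2 * ⟪ω, z⟫ + c) ∧ |c| < 2 * ‖z‖ := by
  classical
  have ha' : ∀ i, a i ≠ 0 := fun i => (ha i).ne'
  set z : EuclideanSpace ℝ (Fin n) := WithLp.toLp 2 (fun i => a i * (y i - x i)) with hzdef
  set c : ℝ := ‖x‖ ^ 2 - ‖y‖ ^ 2 with hcdef
  refine ⟨z, c, ?_, ?_⟩
  · intro ω hω
    have key : ⟪ω, z⟫ = ⟪y, ξ ω⟫ - ⟪x, ξ ω⟫ := by
      rw [inner_eq_sum, inner_eq_sum, inner_eq_sum, ← Finset.sum_sub_distrib]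
      refine Finset.sum_congr rfl fun i _ => ?_
      rw [hξ]
      show ω i * (a i * (y i - x i)) = _
      ring
    rw [hθ, hθ, norm_sub_sq_real, norm_sub_sq_real, key, hcdef]
    ring
  · set p : EuclideanSpace ℝ (Fin n) := WithLp.toLp 2 (fun i => x i / a i) with hpdef
    set q : EuclideanSpace ℝ (Fin n) := WithLp.toLp 2 (fun i => y i / a i) with hqdef
    have hp : ‖p‖ ^ 2 ≤ 1 := by
      rw [norm_sq_eq_sum]
      calc ∑ i, p i ^ 2 = ∑ i, x i ^ 2 / a i ^ 2 := by
            refine Finset.sum_congr rfl fun i _ => ?_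
            show (x i / a i) ^ 2 = _
            rw [div_pow]
        _ ≤ 1 := hx
    have hq : ‖q‖ ^ 2 ≤ 1 := by
      rw [norm_sq_eq_sum]
      calc ∑ i, q i ^ 2 = ∑ i, y i ^ 2 / a i ^ 2 := by
            refine Finset.sum_congr rfl fun i _ => ?_
            show (y i / a i) ^ 2 = _
            rw [div_pow]
        _ ≤ 1 := hy
    have hpq : p ≠ q := by
      intro h
      apply hxy
      ext i
      have : p i = q i := by rw [h]
      have h2 : x i / a i = y i / a i := this
      rw [div_eq_div_iff (ha' i) (ha' i)] at h2
      exact mul_right_cancel₀ (ha' i) h2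
    have hz0 : z ≠ 0 := by
      intro h
      apply hxy
      ext i
      have : z i = 0 := by rw [h]; rfl
      have h2 : a i * (y i - x i) = 0 := this
      rcases mul_eq_zero.mp h2 with h3 | h3
      · exact absurd h3 (ha' i)
      · linarith
    have hznorm : 0 < ‖z‖ := norm_pos_iff.mpr hz0
    have hsubpos : 0 < ‖p - q‖ := norm_pos_iff.mpr (sub_ne_zero.mpr hpq)
    -- c = -⟪z, p + q⟫
    have hc : c = -⟪z, p + q⟫ := by
      rw [inner_eq_sum, hcdef, norm_sq_eq_sum, norm_sq_eq_sum, ← Finset.sum_sub_distrib,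
        ← Finset.sum_neg_distrib]
      refine Finset.sum_congr rfl fun i _ => ?_
      show x i ^ 2 - y i ^ 2 = -(a i * (y i - x i) * (x i / a i + y i / a i))
      field_simp [ha' i]
      ring
    have hCS : |⟪z, p + q⟫| ≤ ‖z‖ * ‖p + q‖ := abs_real_inner_le_norm z (p + q)
    have hadd : ‖p + q‖ ^ 2 = ‖p‖ ^ 2 + 2 * ⟪p, q⟫ + ‖q‖ ^ 2 := norm_add_sq_real p q
    have hsub : ‖p - q‖ ^ 2 = ‖p‖ ^ 2 - 2 * ⟪p, q⟫ + ‖q‖ ^ 2 := norm_sub_sq_real p q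
    have hlt : ‖p + q‖ < 2 := by nlinarith [norm_nonneg (p + q), sq_nonneg (‖p + q‖ - 2)]
    calc |c| = |⟪z, p + q⟫| := by rw [hc, abs_neg]
      _ ≤ ‖z‖ * ‖p + q‖ := hCS
      _ < ‖z‖ * 2 := by exact (mul_lt_mul_iff_right₀ hznorm).mpr hlt
      _ = 2 * ‖z‖ := mul_comm _ _
end

section
/- Let ξ: ℝ/2πℤ → ℝ² be a trigonometric curve of degree k (each coordinate a real trigonometric polynomial of degree ≤ k), and let H be its hyperbolic set: the set of points x such that every line through x meets the curve in 2k points counted with multiplicity (i.e., for every unit vector v orthogonal to a direction, the trigonometric polynomial φ ↦ ⟨ξ(φ) − x, v⟩ has all 2k zeros real). Then H is convex. -/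
open Complex Polynomial Finset

noncomputable def Gf (A B : ℕ → ℝ) (k : ℕ) : ℂ → ℂ := fun ζ =>
  ∑ j ∈ Finset.range (k + 1),
    ((A j : ℂ) * Complex.cos (j * ζ) + (B j : ℂ) * Complex.sin (j * ζ))

noncomputable def cp (A B : ℕ → ℝ) (j : ℕ) : ℂ := ((A j : ℂ) - (B j : ℂ) * I) / 2
noncomputable def cm (A B : ℕ → ℝ) (j : ℕ) : ℂ := ((A j : ℂ) + (B j : ℂ) * I) / 2

noncomputable def Rp (A B : ℕ → ℝ) (M : ℕ) (r : ℝ) : ℂ[X] :=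
  C ((A 0 : ℂ) - (r : ℂ)) * X ^ M +
    ∑ i ∈ Finset.range M,
      (C (cp A B (i + 1)) * X ^ (M + (i + 1)) + C (cm A B (i + 1)) * X ^ (M - (i + 1)))

lemma Rp_eval (A B : ℕ → ℝ) (k M : ℕ) (r : ℝ) (hMk : M ≤ k)
    (htop : ∀ j, M < j → j ≤ k → A j = 0 ∧ B j = 0) (ζ : ℂ) :
    (Rp A B M r).eval (Complex.exp (I * ζ)) =
      Complex.exp ((M : ℂ) * ζ * I) * (Gf A B k ζ - (r : ℂ)) := by
  set w := Complex.exp (I * ζ) with hw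
  have hw0 : w ≠ 0 := Complex.exp_ne_zero _
  have hpow : ∀ n : ℕ, w ^ n = Complex.exp ((n : ℂ) * ζ * I) := by
    intro n
    rw [hw, ← Complex.exp_nat_mul]
    congr 1; ring
  have hsum : Gf A B k ζ =
      (A 0 : ℂ) + ∑ i ∈ Finset.range M,
        ((A (i+1) : ℂ) * Complex.cos ((i+1 : ℕ) * ζ) + (B (i+1) : ℂ) * Complex.sin ((i+1 : ℕ) * ζ)) := by
    rw [Gf, Finset.sum_range_succ']
    have h0 : ((A 0 : ℂ) * Complex.cos ((0 : ℕ) * ζ) + (B 0 : ℂ) * Complex.sin ((0 : ℕ) * ζ)) = (A 0 : ℂ) := by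
      simp
    rw [h0, add_comm]
    congr 1
    rw [← Finset.sum_subset (Finset.range_subset_range.2 hMk)]
    intro x hx hnx
    simp only [Finset.mem_range] at hx hnx
    obtain ⟨hA, hB⟩ := htop (x+1) (by omega) (by omega)
    simp [hA, hB]
  rw [Rp, eval_add, eval_mul, eval_pow, eval_C, eval_X, eval_finset_sum, hsum]
  have hterm : ∀ i ∈ Finset.range M,
      eval w (C (cp A B (i + 1)) * X ^ (M + (i + 1)) + C (cm A B (i + 1)) * X ^ (M - (i + 1)))
      = Complex.exp ((M : ℂ) * ζ * I) *
        ((A (i+1) : ℂ) * Complex.cos ((i+1 : ℕ) * ζ) + (B (i+1) : ℂ) * Complex.sin ((i+1 : ℕ) * ζ)) := by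
    intro i hi
    simp only [Finset.mem_range] at hi
    have hn : i + 1 ≤ M := hi
    set n := i + 1 with hndef
    have e1 : w ^ (M + n) = Complex.exp ((M : ℂ) * ζ * I) * Complex.exp ((n : ℂ) * ζ * I) := by
      rw [pow_add, hpow M, hpow n]
    have e2 : w ^ (M - n) = Complex.exp ((M : ℂ) * ζ * I) * Complex.exp (-((n : ℂ) * ζ * I)) := by
      have h3 : w ^ (M - n) * w ^ n = w ^ M := by
        rw [← pow_add]; congr 1; omega
      have h4 : w ^ (M - n) = w ^ M / w ^ n := by
        field_simp [pow_ne_zero _ hw0] at h3 ⊢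
        linear_combination h3
      rw [h4, hpow M, hpow n, Complex.exp_neg, div_eq_mul_inv]
    rw [eval_add, eval_mul, eval_mul, eval_pow, eval_pow, eval_C, eval_C, eval_X, e1, e2]
    have hcos : Complex.cos ((n : ℂ) * ζ) =
        (Complex.exp ((n : ℂ) * ζ * I) + Complex.exp (-((n : ℂ) * ζ * I))) / 2 := by
      rw [Complex.cos]; ring_nf
    have hsin : Complex.sin ((n : ℂ) * ζ) =
        (Complex.exp (-((n : ℂ) * ζ * I)) - Complex.exp ((n : ℂ) * ζ * I)) * I / 2 := by
      rw [Complex.sin]; ring_nf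
    push_cast at hcos hsin ⊢
    rw [hcos, hsin, cp, cm]
    ring
  rw [Finset.sum_congr rfl hterm, ← Finset.mul_sum, hpow M]
  ring

lemma cp_ne_zero {A B : ℕ → ℝ} {j : ℕ} (h : ¬(A j = 0 ∧ B j = 0)) : cp A B j ≠ 0 := by
  rw [cp]
  intro hc
  apply h
  have h2 : (A j : ℂ) - (B j : ℂ) * I = 0 := by
    field_simp at hc; simpa using hc
  constructor <;> [skip; skip] <;>
  · have hre := congrArg Complex.re h2
    have him := congrArg Complex.im h2
    simp at hre him
    tauto

lemma cm_ne_zero {A B : ℕ → ℝ} {j : ℕ} (h : ¬(A j = 0 ∧ B j = 0)) : cm A B j ≠ 0 := by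
  rw [cm]
  intro hc
  apply h
  have h2 : (A j : ℂ) + (B j : ℂ) * I = 0 := by
    field_simp at hc; simpa using hc
  constructor <;>
  · have hre := congrArg Complex.re h2
    have him := congrArg Complex.im h2
    simp at hre him
    tauto

lemma Rp_coeff_top (A B : ℕ → ℝ) (M : ℕ) (r : ℝ) (hM1 : 1 ≤ M) :
    (Rp A B M r).coeff (2 * M) = cp A B M := by
  rw [Rp, coeff_add, coeff_C_mul, coeff_X_pow, if_neg (by omega), finset_sum_coeff]
  rw [Finset.sum_eq_single (M - 1)]
  · simp only [coeff_add, coeff_C_mul, coeff_X_pow]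
    rw [if_pos (by omega), if_neg (by omega)]
    have : M - 1 + 1 = M := by omega
    rw [this]; ring
  · intro i hi hne
    simp only [Finset.mem_range] at hi
    simp only [coeff_add, coeff_C_mul, coeff_X_pow]
    rw [if_neg (by omega), if_neg (by omega)]
    ring
  · intro h
    exfalso
    exact h (Finset.mem_range.2 (by omega))

lemma Rp_coeff_zero (A B : ℕ → ℝ) (M : ℕ) (r : ℝ) (hM1 : 1 ≤ M) :
    (Rp A B M r).coeff 0 = cm A B M := by
  rw [Rp, coeff_add, coeff_C_mul, coeff_X_pow, if_neg (by omega), finset_sum_coeff]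
  rw [Finset.sum_eq_single (M - 1)]
  · simp only [coeff_add, coeff_C_mul, coeff_X_pow]
    rw [if_neg (by omega), if_pos (by omega)]
    have : M - 1 + 1 = M := by omega
    rw [this]; ring
  · intro i hi hne
    simp only [Finset.mem_range] at hi
    simp only [coeff_add, coeff_C_mul, coeff_X_pow]
    rw [if_neg (by omega), if_neg (by omega)]
    ring
  · intro h
    exfalso
    exact h (Finset.mem_range.2 (by omega))

lemma Rp_degree_le (A B : ℕ → ℝ) (M : ℕ) (r : ℝ) :
    (Rp A B M r).natDegree ≤ 2 * M := by
  rw [Rp]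
  refine (natDegree_add_le _ _).trans (max_le ?_ ?_)
  · exact (natDegree_C_mul_le _ _).trans (by simp [natDegree_X_pow]; omega)
  · refine natDegree_sum_le_of_forall_le _ _ (fun i hi => ?_)
    simp only [Finset.mem_range] at hi
    refine (natDegree_add_le _ _).trans (max_le ?_ ?_) <;>
      exact (natDegree_C_mul_le _ _).trans (by simp [natDegree_X_pow]; omega)

lemma Rp_ne_zero (A B : ℕ → ℝ) (M : ℕ) (r : ℝ) (hM1 : 1 ≤ M)
    (hcM : ¬(A M = 0 ∧ B M = 0)) : Rp A B M r ≠ 0 := by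
  intro h
  have := Rp_coeff_top A B M r hM1
  rw [h] at this
  simp at this
  exact cp_ne_zero hcM this.symm

lemma Rp_natDegree (A B : ℕ → ℝ) (M : ℕ) (r : ℝ) (hM1 : 1 ≤ M)
    (hcM : ¬(A M = 0 ∧ B M = 0)) : (Rp A B M r).natDegree = 2 * M := by
  refine le_antisymm (Rp_degree_le A B M r) ?_
  apply le_natDegree_of_ne_zero
  rw [Rp_coeff_top A B M r hM1]
  exact cp_ne_zero hcM

lemma Rp_leadingCoeff (A B : ℕ → ℝ) (M : ℕ) (r : ℝ) (hM1 : 1 ≤ M)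
    (hcM : ¬(A M = 0 ∧ B M = 0)) : (Rp A B M r).leadingCoeff = cp A B M := by
  rw [leadingCoeff, Rp_natDegree A B M r hM1 hcM, Rp_coeff_top A B M r hM1]

lemma Rp_roots_card (A B : ℕ → ℝ) (M : ℕ) (r : ℝ) (hM1 : 1 ≤ M)
    (hcM : ¬(A M = 0 ∧ B M = 0)) : Multiset.card (Rp A B M r).roots = 2 * M := by
  rw [← Rp_natDegree A B M r hM1 hcM]
  exact (Polynomial.splits_iff_card_roots.1 (IsAlgClosed.splits _))

lemma Rp_prod (A B : ℕ → ℝ) (M : ℕ) (r : ℝ) (hM1 : 1 ≤ M)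
    (hcM : ¬(A M = 0 ∧ B M = 0)) :
    Rp A B M r = C (cp A B M) * ((Rp A B M r).roots.map (fun a => X - C a)).prod := by
  have h := (IsAlgClosed.splits (Rp A B M r)).eq_prod_roots
  rwa [Rp_leadingCoeff A B M r hM1 hcM] at h

lemma Rp_root_ne_zero (A B : ℕ → ℝ) (M : ℕ) (r : ℝ) (hM1 : 1 ≤ M)
    (hcM : ¬(A M = 0 ∧ B M = 0)) {w : ℂ} (hw : w ∈ (Rp A B M r).roots) : w ≠ 0 := by
  intro h0
  rw [Polynomial.mem_roots (Rp_ne_zero A B M r hM1 hcM)] at hw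
  rw [IsRoot, h0, ← coeff_zero_eq_eval_zero, Rp_coeff_zero A B M r hM1] at hw
  exact cm_ne_zero hcM hw

/-- From a nonzero root of `Rp`, produce a solution of `Gf = r`. -/
lemma Rp_root_sol (A B : ℕ → ℝ) (k M : ℕ) (r : ℝ) (hM1 : 1 ≤ M) (hMk : M ≤ k)
    (htop : ∀ j, M < j → j ≤ k → A j = 0 ∧ B j = 0)
    (hcM : ¬(A M = 0 ∧ B M = 0)) {w : ℂ} (hw : w ∈ (Rp A B M r).roots) :
    ∃ ζ : ℂ, Complex.exp (I * ζ) = w ∧ Gf A B k ζ = (r : ℂ) ∧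
      (ζ.im = 0 ↔ ‖w‖ = 1) := by
  have hw0 : w ≠ 0 := Rp_root_ne_zero A B M r hM1 hcM hw
  refine ⟨-(I * Complex.log w), ?_, ?_, ?_⟩
  · have : I * -(I * Complex.log w) = Complex.log w := by
      rw [mul_neg, ← mul_assoc, Complex.I_mul_I]; ring
    rw [this, Complex.exp_log hw0]
  · have heq : Complex.exp (I * -(I * Complex.log w)) = w := by
      have : I * -(I * Complex.log w) = Complex.log w := by
        rw [mul_neg, ← mul_assoc, Complex.I_mul_I]; ring
      rw [this, Complex.exp_log hw0]
    have hev := Rp_eval A B k M r hMk htop (-(I * Complex.log w))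
    rw [heq] at hev
    rw [Polynomial.mem_roots (Rp_ne_zero A B M r hM1 hcM)] at hw
    rw [IsRoot] at hw
    rw [hw] at hev
    rcases mul_eq_zero.1 hev.symm with h | h
    · exact absurd h (Complex.exp_ne_zero _)
    · linear_combination h
  · have heq : Complex.exp (I * -(I * Complex.log w)) = w := by
      have : I * -(I * Complex.log w) = Complex.log w := by
        rw [mul_neg, ← mul_assoc, Complex.I_mul_I]; ring
      rw [this, Complex.exp_log hw0]
    have him : (-(I * Complex.log w)).im = -(Complex.log w).re := by
      simp [Complex.mul_im]
    rw [him, Complex.log_re]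
    have hpos : 0 < ‖w‖ := norm_pos_iff.mpr hw0
    constructor
    · intro h
      have hl : Real.log ‖w‖ = 0 := by linarith
      rcases Real.log_eq_zero.1 hl with h' | h' | h' <;> [linarith; exact h'; linarith]
    · intro h
      rw [h, Real.log_one]
      ring

lemma logder (s : Multiset ℂ) (z : ℂ) (hz : ∀ w ∈ s, z ≠ w) :
    eval z (derivative (s.map (fun a => X - C a)).prod) =
    eval z ((s.map (fun a => X - C a)).prod) * (s.map (fun w => 1 / (z - w))).sum := by
  induction s using Multiset.induction_on with
  | empty => simp
  | cons a t ih =>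
    have hza : z - a ≠ 0 := sub_ne_zero.2 (hz a (Multiset.mem_cons_self a t))
    have ht : ∀ w ∈ t, z ≠ w := fun w hw => hz w (Multiset.mem_cons_of_mem hw)
    simp only [Multiset.map_cons, Multiset.prod_cons, Multiset.sum_cons, derivative_mul,
      derivative_sub, derivative_X, derivative_C, sub_zero, one_mul, eval_add, eval_mul,
      eval_sub, eval_X, eval_C]
    rw [ih ht]
    field_simp

lemma re_lt_half {z w : ℂ} (hz : ‖z‖ < 1) (hw : ‖w‖ = 1) :
    (z / (z - w)).re < 1 / 2 := by
  have hzw : z - w ≠ 0 := by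
    intro h
    rw [sub_eq_zero] at h
    rw [h, hw] at hz
    linarith
  have hns : 0 < Complex.normSq (z - w) := Complex.normSq_pos.2 hzw
  have h1 : Complex.normSq z < 1 := by
    have h := Complex.sq_norm z
    nlinarith [norm_nonneg z]
  have h2 : Complex.normSq w = 1 := by rw [← Complex.sq_norm, hw]; norm_num
  rw [Complex.div_re]
  rw [← add_div, div_lt_iff₀ hns]
  simp only [Complex.normSq_apply, Complex.sub_re, Complex.sub_im] at *
  nlinarith

lemma multiset_sum_pos (s : Multiset ℝ) (h : ∀ x ∈ s, 0 < x) (hs : s ≠ 0) : 0 < s.sum := by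
  induction s using Multiset.induction_on with
  | empty => simp at hs
  | cons a t ih =>
    rw [Multiset.sum_cons]
    rcases eq_or_ne t 0 with rfl | ht
    · simpa using h a (by simp)
    · have h1 := ih (fun x hx => h x (Multiset.mem_cons_of_mem hx)) ht
      have h2 := h a (Multiset.mem_cons_self a t)
      linarith

lemma level (A B : ℕ → ℝ) (k M : ℕ) (hM1 : 1 ≤ M) (hMk : M ≤ k)
    (htop : ∀ j, M < j → j ≤ k → A j = 0 ∧ B j = 0) (hcM : ¬(A M = 0 ∧ B M = 0))
    (r c : ℝ) (Hr : ∀ ζ : ℂ, Gf A B k ζ = (r : ℂ) → ζ.im = 0)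
    (ζ₀ : ℂ) (hpos : 0 < ζ₀.im) (hc : Gf A B k ζ₀ = (c : ℂ)) :
    ∃ E : ℂ, HasDerivAt (Gf A B k) (((c - r : ℝ) : ℂ) * E) ζ₀ ∧ E.im < 0 := by
  classical
  set RR := Rp A B M r with hRR
  set z₀ := Complex.exp (I * ζ₀) with hz₀
  have hz₀abs : ‖z₀‖ < 1 := by
    rw [hz₀, Complex.norm_exp]
    rw [Real.exp_lt_one_iff]
    have : (I * ζ₀).re = -ζ₀.im := by simp [Complex.mul_re]
    rw [this]
    linarith
  have hroots : ∀ w ∈ RR.roots, ‖w‖ = 1 := by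
    intro w hw
    obtain ⟨ζw, _, hGw, hiff⟩ := Rp_root_sol A B k M r hM1 hMk htop hcM hw
    exact hiff.1 (Hr ζw hGw)
  have hz_ne : ∀ w ∈ RR.roots, z₀ ≠ w := by
    intro w hw h
    rw [h, hroots w hw] at hz₀abs
    linarith
  -- global identity for Gf
  have hGeq : Gf A B k = fun ζ =>
      (r : ℂ) + Complex.exp (-((M : ℂ) * ζ * I)) * eval (Complex.exp (I * ζ)) RR := by
    funext ζ
    rw [hRR, Rp_eval A B k M r hMk htop ζ]
    rw [← mul_assoc, ← Complex.exp_add]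
    simp
  -- derivative computation
  have hexp : HasDerivAt (fun ζ : ℂ => Complex.exp (I * ζ)) (Complex.exp (I * ζ₀) * I) ζ₀ := by
    have h1 : HasDerivAt (fun ζ : ℂ => I * ζ) I ζ₀ := by
      simpa using (hasDerivAt_id ζ₀).const_mul I
    exact (Complex.hasDerivAt_exp (I * ζ₀)).comp ζ₀ h1
  have heval : HasDerivAt (fun ζ : ℂ => eval (Complex.exp (I * ζ)) RR)
      (eval z₀ (derivative RR) * (Complex.exp (I * ζ₀) * I)) ζ₀ :=
    by have h := (Polynomial.hasDerivAt RR (Complex.exp (I * ζ₀))).comp ζ₀ hexp; exact h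
  have hexp2 : HasDerivAt (fun ζ : ℂ => Complex.exp (-((M : ℂ) * ζ * I)))
      (Complex.exp (-((M : ℂ) * ζ₀ * I)) * (-((M : ℂ) * I))) ζ₀ := by
    have hfun : (fun ζ : ℂ => Complex.exp (-((M : ℂ) * ζ * I))) =
        fun ζ : ℂ => Complex.exp ((-((M : ℂ) * I)) * ζ) := by
      funext ζ; congr 1; ring
    have harg : -((M : ℂ) * ζ₀ * I) = (-((M : ℂ) * I)) * ζ₀ := by ring
    rw [hfun, harg]
    have h1 : HasDerivAt (fun ζ : ℂ => (-((M : ℂ) * I)) * ζ) (-((M : ℂ) * I)) ζ₀ := by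
      simpa using (hasDerivAt_id ζ₀).const_mul (-((M : ℂ) * I))
    exact (Complex.hasDerivAt_exp _).comp ζ₀ h1
  have hD : HasDerivAt (Gf A B k)
      ((Complex.exp (-((M : ℂ) * ζ₀ * I)) * (-((M : ℂ) * I))) * eval z₀ RR +
        Complex.exp (-((M : ℂ) * ζ₀ * I)) *
          (eval z₀ (derivative RR) * (Complex.exp (I * ζ₀) * I))) ζ₀ := by
    rw [hGeq]
    exact ((hexp2.mul heval).const_add (r : ℂ))
  -- evaluate
  have evalRR : eval z₀ RR = Complex.exp ((M : ℂ) * ζ₀ * I) * ((c : ℂ) - r) := by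
    rw [hRR, Rp_eval A B k M r hMk htop ζ₀, hc]
  set S := (RR.roots.map (fun w => 1 / (z₀ - w))).sum with hS
  have evalD : eval z₀ (derivative RR) = eval z₀ RR * S := by
    have h := Rp_prod A B M r hM1 hcM
    rw [← hRR] at h
    conv_lhs => rw [h, derivative_C_mul]
    rw [eval_mul, eval_C, logder _ _ hz_ne, ← hS]
    conv_rhs => rw [h]
    rw [eval_mul, eval_C]
    ring
  refine ⟨(-(M : ℂ) + z₀ * S) * I, ?_, ?_⟩
  · have hee : Complex.exp (-((M : ℂ) * ζ₀ * I)) * Complex.exp ((M : ℂ) * ζ₀ * I) = 1 := by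
      rw [← Complex.exp_add]; simp
    have hval : Complex.exp (-((M : ℂ) * ζ₀ * I)) * -((M : ℂ) * I) * eval z₀ RR +
        Complex.exp (-((M : ℂ) * ζ₀ * I)) *
          (eval z₀ (derivative RR) * (Complex.exp (I * ζ₀) * I)) =
        ((c - r : ℝ) : ℂ) * ((-(M : ℂ) + z₀ * S) * I) := by
      rw [evalD, evalRR, ← hz₀]
      push_cast
      linear_combination ((c : ℂ) - r) * ((-(M : ℂ) + z₀ * S) * I) * hee
    exact hval ▸ hD
  · -- imaginary part negative
    have him : ((-(M : ℂ) + z₀ * S) * I).im = (-(M : ℂ) + z₀ * S).re := by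
      simp [Complex.mul_im]
    rw [him]
    have hzS : z₀ * S = (RR.roots.map (fun w => z₀ / (z₀ - w))).sum := by
      have hmc : (RR.roots.map (fun w => z₀ / (z₀ - w))) =
          RR.roots.map (fun w => z₀ * (1 / (z₀ - w))) :=
        Multiset.map_congr rfl (fun w _ => by rw [div_eq_mul_one_div])
      rw [hS, hmc, Multiset.sum_map_mul_left]
    have hre : (z₀ * S).re = (RR.roots.map (fun w => (z₀ / (z₀ - w)).re)).sum := by
      rw [hzS]
      have h1 : ((RR.roots.map (fun w => z₀ / (z₀ - w))).sum).re =
          ((RR.roots.map (fun w => z₀ / (z₀ - w))).map Complex.reAddGroupHom).sum :=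
        Complex.reAddGroupHom.map_multiset_sum _
      rw [h1, Multiset.map_map]
      rfl
    have hcard : Multiset.card RR.roots = 2 * M := Rp_roots_card A B M r hM1 hcM
    have hsumlt : (RR.roots.map (fun w => (z₀ / (z₀ - w)).re)).sum < (M : ℝ) := by
      have hpos' : 0 < ((RR.roots.map (fun w => 1/2 - (z₀ / (z₀ - w)).re))).sum := by
        apply multiset_sum_pos
        · intro x hx
          obtain ⟨w, hw, rfl⟩ := Multiset.mem_map.1 hx
          have := re_lt_half hz₀abs (hroots w hw)
          linarith
        · intro h0
          have := congrArg Multiset.card h0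
          simp [hcard] at this
          omega
      have hsplit : ((RR.roots.map (fun w => 1/2 - (z₀ / (z₀ - w)).re))).sum =
          (Multiset.card RR.roots : ℝ) * (1/2) -
            (RR.roots.map (fun w => (z₀ / (z₀ - w)).re)).sum := by
        induction RR.roots using Multiset.induction_on with
        | empty => simp
        | cons a t ih =>
          simp only [Multiset.map_cons, Multiset.sum_cons, Multiset.card_cons]
          push_cast
          rw [ih]
          ring
      rw [hsplit, hcard] at hpos'
      push_cast at hpos' ⊢
      linarith
    simp only [Complex.add_re, Complex.neg_re, Complex.natCast_re]
    rw [hre]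
    linarith

lemma Gf_conj (A B : ℕ → ℝ) (k : ℕ) (ζ : ℂ) :
    Gf A B k ((starRingEnd ℂ) ζ) = (starRingEnd ℂ) (Gf A B k ζ) := by
  rw [Gf, Gf, map_sum]
  apply Finset.sum_congr rfl
  intro j _
  rw [map_add, map_mul, map_mul, Complex.conj_ofReal, Complex.conj_ofReal,
    ← Complex.cos_conj, ← Complex.sin_conj, map_mul, map_natCast]

lemma main_lemma (A B : ℕ → ℝ) (k M : ℕ) (hM1 : 1 ≤ M) (hMk : M ≤ k)
    (htop : ∀ j, M < j → j ≤ k → A j = 0 ∧ B j = 0) (hcM : ¬(A M = 0 ∧ B M = 0))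
    (a b c : ℝ) (hac : a < c) (hcb : c < b)
    (Ha : ∀ ζ : ℂ, Gf A B k ζ = (a : ℂ) → ζ.im = 0)
    (Hb : ∀ ζ : ℂ, Gf A B k ζ = (b : ℂ) → ζ.im = 0) :
    ∀ ζ : ℂ, Gf A B k ζ = (c : ℂ) → ζ.im = 0 := by
  have core : ∀ ζ₀ : ℂ, 0 < ζ₀.im → Gf A B k ζ₀ ≠ (c : ℂ) := by
    intro ζ₀ hpos hGc
    obtain ⟨Ea, hEa, hEaim⟩ := level A B k M hM1 hMk htop hcM a c Ha ζ₀ hpos hGc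
    obtain ⟨Eb, hEb, hEbim⟩ := level A B k M hM1 hMk htop hcM b c Hb ζ₀ hpos hGc
    have huniq := hEa.unique hEb
    have him := congrArg Complex.im huniq
    simp only [Complex.mul_im, Complex.ofReal_re, Complex.ofReal_im, zero_mul, add_zero,
      mul_zero] at him
    have h1 : (c - a) * Ea.im < 0 := mul_neg_of_pos_of_neg (by linarith) hEaim
    have h2 : 0 < (c - b) * Eb.im := mul_pos_of_neg_of_neg (by linarith) hEbim
    linarith
  intro ζ h
  by_contra him
  rcases lt_trichotomy ζ.im 0 with h1 | h2 | h3
  · apply core ((starRingEnd ℂ) ζ)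
    · rw [Complex.conj_im]; linarith
    · rw [Gf_conj, h, Complex.conj_ofReal]
  · exact him h2
  · exact core ζ h3 h

/-- If `Gf` is nonconstant but hyperbolic at every level except possibly one, contradiction. -/
lemma nonconst_contra (A B : ℕ → ℝ) (k M : ℕ) (hM1 : 1 ≤ M) (hMk : M ≤ k)
    (htop : ∀ j, M < j → j ≤ k → A j = 0 ∧ B j = 0) (hcM : ¬(A M = 0 ∧ B M = 0))
    (d : ℝ) (Hyp : ∀ r : ℝ, r ≠ d → ∀ ζ : ℂ, Gf A B k ζ = (r : ℂ) → ζ.im = 0) : False := by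
  classical
  set Cb : ℝ := ∑ j ∈ Finset.range (k + 1), (|A j| + |B j|) with hCb
  set r : ℝ := 1 + |d| + Cb with hr
  have hCb0 : 0 ≤ Cb := by
    apply Finset.sum_nonneg
    intro j _
    positivity
  have hrd : r ≠ d := by
    have h1 := le_abs_self d
    intro h
    rw [hr] at h
    linarith
  -- Rp has a root
  have hdeg : (Rp A B M r).natDegree = 2 * M := Rp_natDegree A B M r hM1 hcM
  have hne : Rp A B M r ≠ 0 := Rp_ne_zero A B M r hM1 hcM
  have hdpos : 0 < (Rp A B M r).degree := by
    rw [Polynomial.degree_eq_natDegree hne, hdeg]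
    exact_mod_cast (by omega : 0 < 2 * M)
  obtain ⟨w, hwroot⟩ := Complex.exists_root hdpos
  have hw : w ∈ (Rp A B M r).roots := (Polynomial.mem_roots hne).2 hwroot
  obtain ⟨ζw, hexp, hGw, hiff⟩ := Rp_root_sol A B k M r hM1 hMk htop hcM hw
  have him : ζw.im = 0 := Hyp r hrd ζw hGw
  -- so ζw is real; bound |Gf| there
  have hζ : ζw = ((ζw.re : ℝ) : ℂ) := by
    apply Complex.ext <;> simp [him]
  have hbound : ‖Gf A B k ζw‖ ≤ Cb := by
    rw [Gf, hζ]
    refine (norm_sum_le _ _).trans ?_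
    rw [hCb]
    apply Finset.sum_le_sum
    intro j _
    refine (norm_add_le _ _).trans ?_
    have hc1 : ‖((A j : ℂ) * Complex.cos ((j : ℂ) * (ζw.re : ℂ)))‖ ≤ |A j| := by
      rw [norm_mul, Complex.norm_real, Real.norm_eq_abs]
      have : ((j : ℂ) * (ζw.re : ℂ)) = (((j : ℝ) * ζw.re : ℝ) : ℂ) := by push_cast; ring
      rw [this, ← Complex.ofReal_cos, Complex.norm_real, Real.norm_eq_abs]
      have := Real.abs_cos_le_one ((j : ℝ) * ζw.re)
      nlinarith [abs_nonneg (A j)]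
    have hc2 : ‖((B j : ℂ) * Complex.sin ((j : ℂ) * (ζw.re : ℂ)))‖ ≤ |B j| := by
      rw [norm_mul, Complex.norm_real, Real.norm_eq_abs]
      have : ((j : ℂ) * (ζw.re : ℂ)) = (((j : ℝ) * ζw.re : ℝ) : ℂ) := by push_cast; ring
      rw [this, ← Complex.ofReal_sin, Complex.norm_real, Real.norm_eq_abs]
      have := Real.abs_sin_le_one ((j : ℝ) * ζw.re)
      nlinarith [abs_nonneg (B j)]
    exact add_le_add hc1 hc2
  rw [hGw] at hbound
  rw [Complex.norm_real, Real.norm_eq_abs] at hbound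
  have : r ≤ Cb := (le_abs_self r).trans hbound
  rw [hr] at this
  have : 0 ≤ |d| := abs_nonneg d
  linarith

set_option maxHeartbeats 1000000 in
theorem stmt_12 (k : ℕ) (a₁ b₁ a₂ b₂ : ℕ → ℝ)
    (Ξ₁ Ξ₂ : ℂ → ℂ)
    (hΞ₁ : ∀ ζ : ℂ, Ξ₁ ζ = ∑ j ∈ Finset.range (k + 1),
        ((a₁ j : ℂ) * Complex.cos (j * ζ) + (b₁ j : ℂ) * Complex.sin (j * ζ)))
    (hΞ₂ : ∀ ζ : ℂ, Ξ₂ ζ = ∑ j ∈ Finset.range (k + 1),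
        ((a₂ j : ℂ) * Complex.cos (j * ζ) + (b₂ j : ℂ) * Complex.sin (j * ζ)))
    (H : Set (ℝ × ℝ))
    (hH : H = {x : ℝ × ℝ | ∀ v : ℝ × ℝ, v.1 ^ 2 + v.2 ^ 2 = 1 →
        ∀ ζ : ℂ, (Ξ₁ ζ - (x.1 : ℂ)) * (v.1 : ℂ) + (Ξ₂ ζ - (x.2 : ℂ)) * (v.2 : ℂ) = 0 →
          ζ.im = 0}) :
    Convex ℝ H := by
  classical
  have hproj : ∀ (α β : ℝ) (ζ : ℂ),
      Gf (fun j => a₁ j * α + a₂ j * β) (fun j => b₁ j * α + b₂ j * β) k ζ =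
        Ξ₁ ζ * (α : ℂ) + Ξ₂ ζ * (β : ℂ) := by
    intro α β ζ
    rw [Gf, hΞ₁ ζ, hΞ₂ ζ, Finset.sum_mul, Finset.sum_mul, ← Finset.sum_add_distrib]
    apply Finset.sum_congr rfl
    intro j _
    push_cast
    ring
  rw [hH]
  intro x hx y hy s t hs ht hst
  simp only [Set.mem_setOf_eq] at hx hy ⊢
  intro v hv ζ₀ heq
  simp only [Prod.fst_add, Prod.snd_add, Prod.smul_fst, Prod.smul_snd, smul_eq_mul] at heq
  set A : ℕ → ℝ := fun j => a₁ j * v.1 + a₂ j * v.2 with hA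
  set B : ℕ → ℝ := fun j => b₁ j * v.1 + b₂ j * v.2 with hB
  set a : ℝ := x.1 * v.1 + x.2 * v.2 with ha
  set b : ℝ := y.1 * v.1 + y.2 * v.2 with hb
  set c : ℝ := s * a + t * b with hc
  have hGc : Gf A B k ζ₀ = (c : ℂ) := by
    have hp := hproj v.1 v.2 ζ₀
    rw [← hA, ← hB] at hp
    rw [hc, ha, hb]
    push_cast at heq ⊢
    linear_combination heq + hp
  have Hyp_a : ∀ ζ : ℂ, Gf A B k ζ = (a : ℂ) → ζ.im = 0 := by
    intro ζ h
    apply hx v hv ζ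
    have hp := hproj v.1 v.2 ζ
    rw [← hA, ← hB] at hp
    rw [ha] at h
    push_cast at h ⊢
    linear_combination h - hp
  have Hyp_b : ∀ ζ : ℂ, Gf A B k ζ = (b : ℂ) → ζ.im = 0 := by
    intro ζ h
    apply hy v hv ζ
    have hp := hproj v.1 v.2 ζ
    rw [← hA, ← hB] at hp
    rw [hb] at h
    push_cast at h ⊢
    linear_combination h - hp
  rcases eq_or_ne c a with hca | hca
  · exact Hyp_a ζ₀ (by rw [← hca]; exact hGc)
  rcases eq_or_ne c b with hcb | hcb
  · exact Hyp_b ζ₀ (by rw [← hcb]; exact hGc)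
  -- now c ≠ a and c ≠ b, hence s ≠ 0, t ≠ 0, a ≠ b
  have hab : a ≠ b := by
    intro h
    apply hca
    rw [hc, ← h]
    linear_combination a * hst
  have hs0 : s ≠ 0 := by
    intro h
    apply hcb
    rw [hc, h]
    have ht1 : t = 1 := by linarith
    rw [ht1]; ring
  have ht0 : t ≠ 0 := by
    intro h
    apply hca
    rw [hc, h]
    have hs1 : s = 1 := by linarith
    rw [hs1]; ring
  have hspos : 0 < s := lt_of_le_of_ne hs (Ne.symm hs0)
  have htpos : 0 < t := lt_of_le_of_ne ht (Ne.symm ht0)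
  have hcma : c - a = t * (b - a) := by rw [hc]; linear_combination a * hst
  have hcmb : c - b = s * (a - b) := by rw [hc]; linear_combination b * hst
  by_cases hnc : ∃ j, 1 ≤ j ∧ j ≤ k ∧ ¬(A j = 0 ∧ B j = 0)
  · -- nonconstant case
    obtain ⟨j₀, hj₀1, hj₀k, hj₀⟩ := hnc
    set M : ℕ := Nat.findGreatest (fun m => ¬(A m = 0 ∧ B m = 0)) k with hM
    have hM1 : 1 ≤ M := le_trans hj₀1 (Nat.le_findGreatest hj₀k hj₀)
    have hMk : M ≤ k := Nat.findGreatest_le k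
    have hcM : ¬(A M = 0 ∧ B M = 0) :=
      Nat.findGreatest_spec (P := fun m => ¬(A m = 0 ∧ B m = 0)) hj₀k hj₀
    have htop : ∀ j, M < j → j ≤ k → A j = 0 ∧ B j = 0 := by
      intro j h1 h2
      have := Nat.findGreatest_is_greatest (P := fun m => ¬(A m = 0 ∧ B m = 0)) (n := k)
        (by rw [← hM]; exact h1) h2
      exact not_not.mp this
    rcases lt_or_gt_of_ne hab with hlt | hgt
    · have h1 : a < c := by nlinarith
      have h2 : c < b := by nlinarith
      exact main_lemma A B k M hM1 hMk htop hcM a b c h1 h2 Hyp_a Hyp_b ζ₀ hGc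
    · have h1 : b < c := by nlinarith
      have h2 : c < a := by nlinarith
      exact main_lemma A B k M hM1 hMk htop hcM b a c h1 h2 Hyp_b Hyp_a ζ₀ hGc
  · -- constant case : A j = B j = 0 for 1 ≤ j ≤ k
    push_neg at hnc
    have hAB0 : ∀ j, 1 ≤ j → j ≤ k → A j = 0 ∧ B j = 0 := by
      intro j h1 h2
      by_contra h
      exact absurd (hnc j h1 h2) (by tauto)
    have hconstG : ∀ ζ : ℂ, Gf A B k ζ = ((A 0 : ℝ) : ℂ) := by
      intro ζ
      rw [Gf]
      rw [Finset.sum_eq_single 0]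
      · simp
      · intro j hj hne
        simp only [Finset.mem_range] at hj
        obtain ⟨h1, h2⟩ := hAB0 j (by omega) (by omega)
        simp [h1, h2]
      · intro h
        simp at h
    have hA0c : A 0 = c := by
      have := (hconstG ζ₀).symm.trans hGc
      exact_mod_cast this
    exfalso
    -- rotated direction
    set A' : ℕ → ℝ := fun j => a₁ j * (-v.2) + a₂ j * v.1 with hA'
    set B' : ℕ → ℝ := fun j => b₁ j * (-v.2) + b₂ j * v.1 with hB'
    set d : ℝ := x.1 * (-v.2) + x.2 * v.1 with hd
    by_cases hnc' : ∃ j, 1 ≤ j ∧ j ≤ k ∧ ¬(A' j = 0 ∧ B' j = 0)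
    · obtain ⟨j₀, hj₀1, hj₀k, hj₀⟩ := hnc'
      set M' : ℕ := Nat.findGreatest (fun m => ¬(A' m = 0 ∧ B' m = 0)) k with hM'
      have hM1' : 1 ≤ M' := le_trans hj₀1 (Nat.le_findGreatest hj₀k hj₀)
      have hMk' : M' ≤ k := Nat.findGreatest_le k
      have hcM' : ¬(A' M' = 0 ∧ B' M' = 0) :=
        Nat.findGreatest_spec (P := fun m => ¬(A' m = 0 ∧ B' m = 0)) hj₀k hj₀
      have htop' : ∀ j, M' < j → j ≤ k → A' j = 0 ∧ B' j = 0 := by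
        intro j h1 h2
        have := Nat.findGreatest_is_greatest (P := fun m => ¬(A' m = 0 ∧ B' m = 0)) (n := k)
          (by rw [← hM']; exact h1) h2
        exact not_not.mp this
      refine nonconst_contra A' B' k M' hM1' hMk' htop' hcM' d ?_
      intro r hrd ζ hGr
      set ε : ℝ := (a - c) / (r - d) with hε
      have hrd' : r - d ≠ 0 := sub_ne_zero.2 hrd
      have hεne : ε * (r - d) = a - c := by
        rw [hε]; field_simp
      set n : ℝ := Real.sqrt (1 + ε ^ 2) with hn
      have hn2 : n ^ 2 = 1 + ε ^ 2 := Real.sq_sqrt (by positivity)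
      have hnpos : 0 < n := Real.sqrt_pos.2 (by positivity)
      have hnn0 : n ^ 2 ≠ 0 := by positivity
      have hunit : ((v.1 - ε * v.2) / n) ^ 2 + ((v.2 + ε * v.1) / n) ^ 2 = 1 := by
        have hkey : (v.1 - ε * v.2) ^ 2 + (v.2 + ε * v.1) ^ 2 = n ^ 2 := by
          rw [hn2]; nlinarith [hv]
        rw [div_pow, div_pow, ← add_div, hkey]
        exact div_self hnn0
      have happly := hx ((v.1 - ε * v.2) / n, (v.2 + ε * v.1) / n) hunit ζ
      apply happly
      -- the equation
      have hp1 := hproj v.1 v.2 ζ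
      rw [← hA, ← hB] at hp1
      have hc1 : Ξ₁ ζ * (v.1 : ℂ) + Ξ₂ ζ * (v.2 : ℂ) = ((c : ℝ) : ℂ) := by
        rw [← hp1, hconstG ζ, hA0c]
      have hp2 := hproj (-v.2) v.1 ζ
      rw [← hA', ← hB'] at hp2
      have hc2 : Ξ₁ ζ * ((-v.2 : ℝ) : ℂ) + Ξ₂ ζ * ((v.1 : ℝ) : ℂ) = ((r : ℝ) : ℂ) := by
        rw [← hp2, hGr]
      have hεc : ((ε : ℝ) : ℂ) * (((r : ℝ) : ℂ) - ((d : ℝ) : ℂ)) =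
          ((a : ℝ) : ℂ) - ((c : ℝ) : ℂ) := by
        exact_mod_cast congrArg (fun u : ℝ => (u : ℂ)) hεne
      rw [ha] at hεc
      rw [hd] at hεc
      push_cast at hc1 hc2 hεc ⊢
      have hnne : (n : ℂ) ≠ 0 := by
        exact_mod_cast ne_of_gt hnpos
      field_simp
      linear_combination hc1 + (ε : ℂ) * hc2 + hεc
    · -- both directions constant: the curve is a single point
      push_neg at hnc'
      have hAB0' : ∀ j, 1 ≤ j → j ≤ k → A' j = 0 ∧ B' j = 0 := by
        intro j h1 h2
        by_contra h
        exact absurd (hnc' j h1 h2) (by tauto)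
      have hzero : ∀ j, 1 ≤ j → j ≤ k → a₁ j = 0 ∧ a₂ j = 0 ∧ b₁ j = 0 ∧ b₂ j = 0 := by
        intro j h1 h2
        obtain ⟨hA1, hB1⟩ := hAB0 j h1 h2
        obtain ⟨hA2, hB2⟩ := hAB0' j h1 h2
        rw [hA] at hA1; rw [hB] at hB1; rw [hA'] at hA2; rw [hB'] at hB2
        simp only at hA1 hB1 hA2 hB2
        refine ⟨?_, ?_, ?_, ?_⟩
        · linear_combination v.1 * hA1 - v.2 * hA2 - a₁ j * hv
        · linear_combination v.2 * hA1 + v.1 * hA2 - a₂ j * hv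
        · linear_combination v.1 * hB1 - v.2 * hB2 - b₁ j * hv
        · linear_combination v.2 * hB1 + v.1 * hB2 - b₂ j * hv
      have hΞ₁c : ∀ ζ : ℂ, Ξ₁ ζ = ((a₁ 0 : ℝ) : ℂ) := by
        intro ζ
        rw [hΞ₁ ζ, Finset.sum_eq_single 0]
        · simp
        · intro j hj hne
          simp only [Finset.mem_range] at hj
          obtain ⟨h1, _, h3, _⟩ := hzero j (by omega) (by omega)
          simp [h1, h3]
        · intro h; simp at h
      have hΞ₂c : ∀ ζ : ℂ, Ξ₂ ζ = ((a₂ 0 : ℝ) : ℂ) := by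
        intro ζ
        rw [hΞ₂ ζ, Finset.sum_eq_single 0]
        · simp
        · intro j hj hne
          simp only [Finset.mem_range] at hj
          obtain ⟨_, h2, _, h4⟩ := hzero j (by omega) (by omega)
          simp [h2, h4]
        · intro h; simp at h
      -- q = x - p ≠ 0
      set q1 : ℝ := x.1 - a₁ 0 with hq1
      set q2 : ℝ := x.2 - a₂ 0 with hq2
      have hA0 : A 0 = a₁ 0 * v.1 + a₂ 0 * v.2 := by rw [hA]
      have hq : ¬(q1 = 0 ∧ q2 = 0) := by
        rintro ⟨h1, h2⟩
        apply hca
        have hx1 : x.1 = a₁ 0 := by rw [hq1] at h1; linarith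
        have hx2 : x.2 = a₂ 0 := by rw [hq2] at h2; linarith
        rw [← hA0c, hA0, ha, hx1, hx2]
      have hqpos : 0 < q1 ^ 2 + q2 ^ 2 := by
        rcases not_and_or.1 hq with h | h
        · positivity
        · positivity
      set nq : ℝ := Real.sqrt (q1 ^ 2 + q2 ^ 2) with hnq
      have hnq2 : nq ^ 2 = q1 ^ 2 + q2 ^ 2 := Real.sq_sqrt (le_of_lt hqpos)
      have hnqpos : 0 < nq := Real.sqrt_pos.2 hqpos
      have hnq0 : nq ^ 2 ≠ 0 := by positivity
      have hunit : (-q2 / nq) ^ 2 + (q1 / nq) ^ 2 = 1 := by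
        have hkey : (-q2) ^ 2 + q1 ^ 2 = nq ^ 2 := by rw [hnq2]; ring
        rw [div_pow, div_pow, ← add_div, hkey]
        exact div_self hnq0
      have happly := hx (-q2 / nq, q1 / nq) hunit Complex.I
      have heqI : (Ξ₁ Complex.I - (x.1 : ℂ)) * ((-q2 / nq : ℝ) : ℂ) +
          (Ξ₂ Complex.I - (x.2 : ℂ)) * ((q1 / nq : ℝ) : ℂ) = 0 := by
        rw [hΞ₁c Complex.I, hΞ₂c Complex.I, hq1, hq2]
        push_cast
        ring
      have := happly heqI
      simp at this
end
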